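/- Let G be the incidence graph of a projective plane of order q = r−1 (so G is r-regular bipartite on 2(r²−r+1) vertices with diameter 3). Then the semi-double graph G^{2V2} is a bipartite biregular graph with degrees r and 2r, order 3r² − 3r + 3, and diameter 3. -/

import Mathlib

/-- The semi-double of the bipartite graph determined by `R : A → B → Prop`, where each
vertex of the part `B` is duplicated (both copies keep the same neighborhood). -/
def bipSemiDoubleB {A B : Type*} (R : A → B → Prop) : SimpleGraph (A ⊕ (B ⊕ B)) where
  Adj x y :=
    match x, y with
    | Sum.inl a, Sum.inr (Sum.inl b) => R a b
    | Sum.inl a, Sum.inr (Sum.inr b) => R a b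
    | Sum.inr (Sum.inl b), Sum.inl a => R a b
    | Sum.inr (Sum.inr b), Sum.inl a => R a b
    | _, _ => False
  symm := by constructor; rintro (a | b | b) (a' | b' | b') h <;> simp_all
  loopless := by constructor; rintro (a | b | b) h <;> simp_all

open Configuration Configuration.ProjectivePlane SimpleGraph

/-- Let `G` be the incidence graph of a projective plane of order
`q = r−1`.  Then the semi-double graph `G^{2V2}` (duplicating the line part) is a
bipartite biregular graph with degrees `r` and `2r`, order `3r² − 3r + 3`,
and diameter `3`. -/
theorem stmt_14 (P L : Type*) [Fintype P] [Fintype L] [Membership P L]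
    [Configuration.ProjectivePlane P L] (r : ℕ)
    (hr : Configuration.ProjectivePlane.order P L + 1 = r) :
    (∀ b : L ⊕ L, ((bipSemiDoubleB (fun (p : P) (l : L) => p ∈ l)).neighborSet
        (Sum.inr b)).ncard = r) ∧
      (∀ p : P, ((bipSemiDoubleB (fun (p : P) (l : L) => p ∈ l)).neighborSet
        (Sum.inl p)).ncard = 2 * r) ∧
      Fintype.card (P ⊕ (L ⊕ L)) = 3 * r ^ 2 - 3 * r + 3 ∧
      (bipSemiDoubleB (fun (p : P) (l : L) => p ∈ l)).diam = 3 := by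
  classical
  set q := Configuration.ProjectivePlane.order P L with hq
  set G := bipSemiDoubleB (fun (p : P) (l : L) => p ∈ l) with hG
  -- basic counting facts
  have hptcount : ∀ l : L, ({p : P | p ∈ l}).ncard = q + 1 := by
    intro l
    have h1 : Configuration.pointCount P l = q + 1 :=
      Configuration.ProjectivePlane.pointCount_eq P l
    rw [← Nat.card_coe_set_eq]
    exact h1
  have hlcount : ∀ p : P, ({l : L | p ∈ l}).ncard = q + 1 := by
    intro p
    have h1 : Configuration.lineCount L p = q + 1 :=
      Configuration.ProjectivePlane.lineCount_eq L p
    rw [← Nat.card_coe_set_eq]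
    exact h1
  -- existence helpers
  have hpoint_on : ∀ l : L, ∃ p : P, p ∈ l := by
    intro l
    have h1 : ({p : P | p ∈ l}).ncard = q + 1 := hptcount l
    have h2 : ({p : P | p ∈ l}).Nonempty := by
      rw [← Set.ncard_pos (Set.toFinite _)]; omega
    exact h2
  have hpt_meet : ∀ l m : L, ∃ p : P, p ∈ l ∧ p ∈ m := by
    intro l m
    by_cases h : l = m
    · subst h; obtain ⟨p, hp⟩ := hpoint_on l; exact ⟨p, hp, hp⟩
    · exact ⟨Configuration.HasPoints.mkPoint h, Configuration.HasPoints.mkPoint_ax h⟩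
  have hline_thru : ∀ p p' : P, p ≠ p' → ∃ l : L, p ∈ l ∧ p' ∈ l := by
    intro p p' h
    exact ⟨Configuration.HasLines.mkLine h, Configuration.HasLines.mkLine_ax h⟩
  -- adjacency helpers
  have hadjL : ∀ (p : P) (l : L), p ∈ l → G.Adj (Sum.inl p) (Sum.inr (Sum.inl l)) :=
    fun _ _ h => h
  have hadjR : ∀ (p : P) (l : L), p ∈ l → G.Adj (Sum.inl p) (Sum.inr (Sum.inr l)) :=
    fun _ _ h => h
  have hadjB : ∀ (p : P) (b : L ⊕ L),
      p ∈ (match b with | Sum.inl l => l | Sum.inr l => l) → G.Adj (Sum.inl p) (Sum.inr b) := by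
    rintro p (l | l) h <;> exact h
  refine ⟨?_, ?_, ?_, ?_⟩
  · -- degree of duplicated line vertices
    rintro (b | b)
    · have hset : G.neighborSet (Sum.inr (Sum.inl b)) = Sum.inl '' {p : P | p ∈ b} := by
        ext x
        rcases x with a | c | c <;>
          simp [SimpleGraph.neighborSet, hG, bipSemiDoubleB]
      rw [hset, Set.ncard_image_of_injective _ Sum.inl_injective, hptcount, hr]
    · have hset : G.neighborSet (Sum.inr (Sum.inr b)) = Sum.inl '' {p : P | p ∈ b} := by
        ext x
        rcases x with a | c | c <;>
          simp [SimpleGraph.neighborSet, hG, bipSemiDoubleB]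
      rw [hset, Set.ncard_image_of_injective _ Sum.inl_injective, hptcount, hr]
  · -- degree of point vertices
    intro p
    have hset : G.neighborSet (Sum.inl p) =
        (fun l : L => Sum.inr (Sum.inl l) : L → P ⊕ (L ⊕ L)) '' {l : L | p ∈ l} ∪
        (fun l : L => Sum.inr (Sum.inr l) : L → P ⊕ (L ⊕ L)) '' {l : L | p ∈ l} := by
      ext x
      rcases x with a | c | c <;>
        simp [SimpleGraph.neighborSet, hG, bipSemiDoubleB]
    have hinj1 : Function.Injective (fun l : L => (Sum.inr (Sum.inl l) : P ⊕ (L ⊕ L))) := by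
      intro a b h; simpa using h
    have hinj2 : Function.Injective (fun l : L => (Sum.inr (Sum.inr l) : P ⊕ (L ⊕ L))) := by
      intro a b h; simpa using h
    have hdisj : Disjoint
        ((fun l : L => Sum.inr (Sum.inl l) : L → P ⊕ (L ⊕ L)) '' {l : L | p ∈ l})
        ((fun l : L => Sum.inr (Sum.inr l) : L → P ⊕ (L ⊕ L)) '' {l : L | p ∈ l}) := by
      rw [Set.disjoint_left]
      rintro x ⟨l, -, rfl⟩ ⟨m, -, h⟩
      simp at h
    rw [hset, Set.ncard_union_eq hdisj (Set.toFinite _) (Set.toFinite _),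
      Set.ncard_image_of_injective _ hinj1, Set.ncard_image_of_injective _ hinj2,
      hlcount, hr]
    ring
  · -- order
    have hP : Fintype.card P = q ^ 2 + q + 1 :=
      Configuration.ProjectivePlane.card_points P L
    have hL : Fintype.card L = q ^ 2 + q + 1 :=
      Configuration.ProjectivePlane.card_lines P L
    have hsq : r ^ 2 = q ^ 2 + 2 * q + 1 := by rw [← hr]; ring
    simp only [Fintype.card_sum, hP, hL]
    omega
  · -- diameter
    -- upper bound on distances
    have hub_pl : ∀ (p : P) (b : L ⊕ L), G.edist (Sum.inl p) (Sum.inr b) ≤ 3 := by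
      intro p b
      set l : L := (match b with | Sum.inl l => l | Sum.inr l => l) with hl
      by_cases hmem : p ∈ l
      · refine le_trans (edist_le (Walk.cons (hadjB p b hmem) Walk.nil)) ?_
        norm_num [SimpleGraph.Walk.length_cons, SimpleGraph.Walk.length_nil]
      · obtain ⟨p', hp'⟩ := hpoint_on l
        have hne : p ≠ p' := fun h => hmem (h ▸ hp')
        obtain ⟨m, hpm, hp'm⟩ := hline_thru p p' hne
        refine le_trans (edist_le (Walk.cons (hadjL p m hpm)
            (Walk.cons (G.adj_symm (hadjL p' m hp'm))
              (Walk.cons (hadjB p' b hp') Walk.nil)))) ?_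
        norm_num [SimpleGraph.Walk.length_cons, SimpleGraph.Walk.length_nil]
    have hub : ∀ x y : P ⊕ (L ⊕ L), G.edist x y ≤ 3 := by
      rintro (p | b) (p' | b')
      · by_cases h : p = p'
        · subst h; simp
        · obtain ⟨m, hpm, hp'm⟩ := hline_thru p p' h
          refine le_trans (edist_le (Walk.cons (hadjL p m hpm)
              (Walk.cons (G.adj_symm (hadjL p' m hp'm)) Walk.nil))) ?_
          norm_num [SimpleGraph.Walk.length_cons, SimpleGraph.Walk.length_nil]
      · exact hub_pl p b'
      · rw [_root_.SimpleGraph.edist_comm]; exact hub_pl p' b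
      · obtain ⟨p, hp1, hp2⟩ := hpt_meet
          (match b with | Sum.inl l => l | Sum.inr l => l)
          (match b' with | Sum.inl l => l | Sum.inr l => l)
        refine le_trans (edist_le (Walk.cons (G.adj_symm (hadjB p b hp1))
            (Walk.cons (hadjB p b' hp2) Walk.nil))) ?_
        norm_num [SimpleGraph.Walk.length_cons, SimpleGraph.Walk.length_nil]
    -- a pair at distance exactly 3
    have hLne : Nonempty L := by
      have h1 : 0 < Fintype.card L := by
        rw [Configuration.ProjectivePlane.card_lines P L]; positivity
      exact Fintype.card_pos_iff.mp h1
    obtain ⟨l₀⟩ := hLne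
    obtain ⟨p₀, hp₀⟩ : ∃ p : P, p ∉ l₀ :=
      Configuration.Nondegenerate.exists_point (P := P) (L := L) l₀
    have hno_short : ∀ w : G.Walk (Sum.inl p₀) (Sum.inr (Sum.inl l₀)), ¬ w.length < 3 := by
      intro w hwlen
      cases w with
      | cons h1 w' =>
        rename_i v
        rcases v with a | c | c
        · exact h1
        · cases w' with
          | nil => exact hp₀ h1
          | cons h2 w'' =>
            rename_i v2
            rcases v2 with a | c2 | c2
            · simp only [Walk.length_cons] at hwlen
              have h0 : w''.length = 0 := by omega
              have := Walk.eq_of_length_eq_zero h0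
              simp at this
            · exact h2
            · exact h2
        · cases w' with
          | cons h2 w'' =>
            rename_i v2
            rcases v2 with a | c2 | c2
            · simp only [Walk.length_cons] at hwlen
              have h0 : w''.length = 0 := by omega
              have := Walk.eq_of_length_eq_zero h0
              simp at this
            · exact h2
            · exact h2
    have hdist3 : G.edist (Sum.inl p₀) (Sum.inr (Sum.inl l₀)) = 3 := by
      refine le_antisymm (hub _ _) ?_
      by_contra hcon
      push_neg at hcon
      have hne : G.edist (Sum.inl p₀) (Sum.inr (Sum.inl l₀)) ≠ ⊤ := ne_top_of_lt hcon
      obtain ⟨w, hw⟩ := exists_walk_of_edist_ne_top hne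
      have : (w.length : ℕ∞) < 3 := hw ▸ hcon
      exact hno_short w (by exact_mod_cast this)
    have hediam : G.ediam = 3 := by
      refine le_antisymm (ediam_le_of_edist_le hub) ?_
      rw [← hdist3]
      exact edist_le_ediam
    rw [SimpleGraph.diam, hediam]
    rfl
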